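/- Let a, b, c, α, β ∈ ℂ with α real and nonzero, b ≠ 0, and satisfying a·b̄ = β², c·b̄ = α². Define F : ℂ∖{0} → ℂ² by F(z) = (az + b z̄ + c/z, α·ln z + α·ln z̄ + βz − β̄z̄) (well-defined since α ln z + α ln z̄ = 2α ln|z| is single-valued). Then F is injective. -/

import Mathlib

open Complex ComplexConjugate

theorem stmt_11 (a b c β : ℂ) (α : ℝ) (hα : α ≠ 0) (hb : b ≠ 0)
    (h1 : a * (starRingEnd ℂ) b = β ^ 2) (h2 : c * (starRingEnd ℂ) b = (α : ℂ) ^ 2) :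
    Set.InjOn
      (fun z : ℂ =>
        (a * z + b * (starRingEnd ℂ) z + c / z,
         ((2 * α * Real.log (‖z‖) : ℝ) : ℂ) + β * z -
           (starRingEnd ℂ) β * (starRingEnd ℂ) z))
      {z : ℂ | z ≠ 0} := by
  intro z₁ hz₁ z₂ hz₂ h
  simp only [Set.mem_setOf_eq] at hz₁ hz₂
  simp only [Prod.mk.injEq] at h
  obtain ⟨hA, hB⟩ := h
  -- Step 1: |z₁| = |z₂|
  have hre := congrArg Complex.re hB
  simp only [Complex.add_re, Complex.sub_re, Complex.ofReal_re, Complex.mul_re,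
    Complex.conj_re, Complex.conj_im] at hre
  have hlog : Real.log (‖z₁‖) = Real.log (‖z₂‖) := by
    have h2a : (2*α) * Real.log (‖z₁‖) = (2*α) * Real.log (‖z₂‖) := by
      nlinarith [hre]
    exact mul_left_cancel₀ (mul_ne_zero two_ne_zero hα) h2a
  have habs : ‖z₁‖ = ‖z₂‖ := by
    rw [← Real.exp_log (norm_pos_iff.mpr hz₁), ← Real.exp_log (norm_pos_iff.mpr hz₂), hlog]
  -- Step 2: β(z₁-z₂) = conj β (conj z₁ - conj z₂)
  have hof : ((2 * α * Real.log (‖z₁‖) : ℝ) : ℂ)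
      = ((2 * α * Real.log (‖z₂‖) : ℝ) : ℂ) := by rw [hlog]
  have hβeq : β * (z₁ - z₂) = conj β * (conj z₁ - conj z₂) := by
    linear_combination hB - hof
  -- conj facts
  have hc1 : z₁ * conj z₁ = ((‖z₁‖ : ℂ))^2 := by
    rw [Complex.mul_conj, Complex.normSq_eq_norm_sq]; push_cast; ring
  have hc2 : z₂ * conj z₂ = ((‖z₁‖ : ℂ))^2 := by
    rw [Complex.mul_conj, Complex.normSq_eq_norm_sq, habs]; push_cast; ring
  -- Step 3: clear denominators in first coordinate
  have hA' : a*z₁*z₁*z₂ + b*(conj z₁)*z₁*z₂ + c*z₂ = a*z₂*z₁*z₂ + b*(conj z₂)*z₁*z₂ + c*z₁ := by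
    field_simp at hA
    linear_combination hA
  have key : (β * conj β * ((‖z₁‖ : ℂ))^2 + b * conj b * ((‖z₁‖ : ℂ))^2
      + (α:ℂ)^2) * (z₁ - z₂) = 0 := by
    linear_combination (-(conj b)) * hA' + (z₁*z₂*(z₁-z₂)) * h1 + (-(z₁-z₂)) * h2
      + (β*z₁*z₂) * hβeq + ((β*conj β + b*conj b)*z₂) * hc1
      + (-(β*conj β + b*conj b)*z₁) * hc2
  have hββ : β * conj β = ((‖β‖ : ℂ))^2 := by
    rw [Complex.mul_conj, Complex.normSq_eq_norm_sq]; push_cast; ring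
  have hbb : b * conj b = ((‖b‖ : ℂ))^2 := by
    rw [Complex.mul_conj, Complex.normSq_eq_norm_sq]; push_cast; ring
  have hpos : β * conj β * ((‖z₁‖ : ℂ))^2 + b * conj b * ((‖z₁‖ : ℂ))^2
      + (α:ℂ)^2 ≠ 0 := by
    rw [hββ, hbb]
    have : ((‖β‖ : ℂ))^2 * ((‖z₁‖ : ℂ))^2
        + ((‖b‖ : ℂ))^2 * ((‖z₁‖ : ℂ))^2 + (α:ℂ)^2
        = (((‖β‖)^2 * (‖z₁‖)^2
        + (‖b‖)^2 * (‖z₁‖)^2 + α^2 : ℝ) : ℂ) := by push_cast; ring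
    rw [this, Complex.ofReal_ne_zero]
    have h1p : (0:ℝ) < α^2 := by positivity
    nlinarith [sq_nonneg (‖β‖ * ‖z₁‖), sq_nonneg (‖b‖ * ‖z₁‖)]
  have hsub : z₁ - z₂ = 0 := by
    rcases mul_eq_zero.mp key with h | h
    · exact absurd h hpos
    · exact h
  exact sub_eq_zero.mp hsub
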